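/- Let D ≥ 2 be a squarefree integer and K = ℚ(√D). For every m ∈ ℤ≥1 there exists y ∈ ℤ≥0 such that p_K(⌈yξ_D⌉ + yω_D) ≥ m. -/

import Mathlib

noncomputable section

/-- `ω_D`, so that `(1, ω_D)` is an integral basis of `𝓞(ℚ(√D))`. -/
def omegaD (D : ℤ) : ℝ := if D % 4 = 1 then (1 + Real.sqrt D) / 2 else Real.sqrt D

/-- The Galois conjugate `ω_D′` of `ω_D`. -/
def omegaD' (D : ℤ) : ℝ := if D % 4 = 1 then (1 - Real.sqrt D) / 2 else -(Real.sqrt D)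

/-- `ξ_D = -ω_D′`. -/
def xiD (D : ℤ) : ℝ := -omegaD' D

/-- The real embedding of `𝓞 K`, an element `(x, y)` in the integral basis
`(1, ω_D)` being sent to `x + y ω_D`. -/
def emb (D : ℤ) (a : ℤ × ℤ) : ℝ := a.1 + a.2 * omegaD D

/-- The conjugate real embedding, sending `(x, y)` to `x + y ω_D′`. -/
def embConj (D : ℤ) (a : ℤ × ℤ) : ℝ := a.1 + a.2 * omegaD' D

/-- An element of `𝓞 K` is totally positive if it and its conjugate are positive. -/
def TotPos (D : ℤ) (a : ℤ × ℤ) : Prop := 0 < emb D a ∧ 0 < embConj D a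

/-- The partition function `p_K` of `K = ℚ(√D)`: the number of multisets of
totally positive integers of `K` with sum `α`. -/
def pK (D : ℤ) (α : ℤ × ℤ) : ℕ :=
  Nat.card {m : Multiset (ℤ × ℤ) // (∀ β ∈ m, TotPos D β) ∧ m.sum = α}

end

section aux
variable {D : ℤ}

lemma sqrtD_gt_one (hD : 2 ≤ D) : 1 < Real.sqrt D := by
  have : (1:ℝ) < (D:ℝ) := by exact_mod_cast lt_of_lt_of_le one_lt_two hD
  calc (1:ℝ) = Real.sqrt 1 := by simp
    _ < Real.sqrt D := Real.sqrt_lt_sqrt (by norm_num) this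

lemma sqrtD_irr (hD : 2 ≤ D) (hsf : Squarefree D) : Irrational (Real.sqrt D) := by
  rw [irrational_sqrt_intCast_iff_of_nonneg (by omega)]
  rintro ⟨a, ha⟩
  have h := hsf a (ha ▸ ⟨1, (mul_one _).symm⟩)
  rcases Int.isUnit_iff.mp h with h1 | h1 <;> subst h1 <;> simp at ha <;> omega

lemma xiD_irr (hD : 2 ≤ D) (hsf : Squarefree D) : Irrational (xiD D) := by
  have h := sqrtD_irr hD hsf
  unfold xiD omegaD'
  split
  · have : -((1 - Real.sqrt D) / 2) = (Real.sqrt D - 1) / 2 := by ring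
    rw [this]
    exact_mod_cast ((h.sub_intCast 1).div_intCast (two_ne_zero))
  · simpa using h.neg.neg

lemma xiD_pos (hD : 2 ≤ D) : 0 < xiD D := by
  have h := sqrtD_gt_one hD
  unfold xiD omegaD'
  split <;> [skip; simpa using lt_trans one_pos h] <;> nlinarith

lemma omegaD_pos (hD : 2 ≤ D) : 0 < omegaD D := by
  have h := sqrtD_gt_one hD
  unfold omegaD; split <;> nlinarith

lemma embConj_eq (x y : ℤ) : embConj D (x, y) = x - y * xiD D := by
  unfold embConj xiD; ring

lemma emb_add (a b : ℤ × ℤ) : emb D (a + b) = emb D a + emb D b := by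
  unfold emb; push_cast [Prod.fst_add, Prod.snd_add]; ring

lemma embConj_add (a b : ℤ × ℤ) : embConj D (a + b) = embConj D a + embConj D b := by
  unfold embConj; push_cast [Prod.fst_add, Prod.snd_add]; ring

lemma embConj_sum (s : Multiset (ℤ × ℤ)) :
    embConj D s.sum = (s.map (embConj D)).sum := by
  induction s using Multiset.induction_on with
  | empty => simp [embConj]
  | cons a s ih => simp [embConj_add, ih]

lemma snd_sum (s : Multiset (ℤ × ℤ)) : s.sum.2 = (s.map Prod.snd).sum := by
  induction s using Multiset.induction_on with
  | empty => simp
  | cons a s ih => simp [ih]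

end aux

lemma approx {ξ : ℝ} (hξ : Irrational ξ) {m : ℕ} (hm : 1 ≤ m) :
    ∃ (k : ℕ) (c : ℤ), 0 < k ∧ 0 < (c : ℝ) - k * ξ ∧ (c : ℝ) - k * ξ < 1 / m := by
  obtain ⟨j, k, hk0, hkn, h⟩ := Real.exists_int_int_abs_mul_sub_le ξ (show 0 < m by omega)
  have hne : (k : ℝ) * ξ - j ≠ 0 := sub_ne_zero.mpr ((hξ.intCast_mul (by omega)).ne_int j)
  have hm0 : (0:ℝ) < m := by positivity
  have hm1 : (1:ℝ)/(m+1) < 1/m := by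
    apply one_div_lt_one_div_of_lt hm0; linarith
  obtain ⟨hlow, hhigh⟩ := abs_le.mp h
  have hkk : ((k.toNat : ℕ) : ℝ) = (k : ℝ) := by
    exact_mod_cast congrArg (fun z : ℤ => (z : ℝ)) (Int.toNat_of_nonneg hk0.le)
  rcases lt_or_gt_of_ne hne with hneg | hpos
  · refine ⟨k.toNat, j, by omega, ?_, ?_⟩ <;> rw [hkk] <;> linarith
  · set s : ℝ := (k : ℝ) * ξ - j with hs
    have hx0 : (0:ℝ) ≤ (1 - 1/m)/s := by
      apply div_nonneg _ hpos.le
      have : (1:ℝ)/m ≤ 1 := by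
        rw [div_le_one hm0]; exact_mod_cast hm
      linarith
    set x : ℝ := (1 - 1/m)/s with hxdef
    have hj'x : x < (⌊x⌋₊ : ℝ) + 1 := Nat.lt_floor_add_one x
    have hj'le : (⌊x⌋₊ : ℝ) + 1 ≤ x + 1 := by have := Nat.floor_le hx0; linarith
    have h1 : 1 - 1/m < ((⌊x⌋₊ : ℝ) + 1) * s := by
      have hxs : x * s = 1 - 1/m := div_mul_cancel₀ _ hpos.ne'
      nlinarith [mul_lt_mul_of_pos_right hj'x hpos]
    have h2 : ((⌊x⌋₊ : ℝ) + 1) * s < 1 := by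
      have hxs : x * s = 1 - 1/m := div_mul_cancel₀ _ hpos.ne'
      nlinarith [mul_le_mul_of_nonneg_right hj'le hpos.le]
    rw [hs] at h1 h2
    refine ⟨(⌊x⌋₊ + 1) * k.toNat, (⌊x⌋₊ + 1 : ℤ) * j + 1,
      Nat.mul_pos (Nat.succ_pos _) (by omega), ?_, ?_⟩ <;>
      · push_cast [hkk]
        nlinarith

lemma embConj_eq' (a : ℤ × ℤ) : embConj D a = a.1 - a.2 * xiD D := by
  unfold embConj xiD; ring

theorem exists_y_pK_ge (D : ℤ) (hD : 2 ≤ D) (hsf : Squarefree D)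
    (m : ℕ) (hm : 1 ≤ m) :
    ∃ y : ℕ, m ≤ pK D (⌈(y : ℝ) * xiD D⌉, (y : ℤ)) := by
  classical
  obtain ⟨k, c, hk, hpos, hlt⟩ := approx (xiD_irr hD hsf) hm
  set ξ := xiD D with hξdef
  have hξ0 := xiD_pos hD
  have hω0 := omegaD_pos hD
  have hm0 : (0:ℝ) < m := by positivity
  have hminv : (m:ℝ) * (1/m) = 1 := by field_simp
  refine ⟨m * k, ?_⟩
  have hk0 : (0:ℝ) < k := by exact_mod_cast hk
  have hc0 : (0:ℤ) < c := by
    have : (0:ℝ) < (c:ℝ) := by nlinarith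
    exact_mod_cast this
  set α : ℤ × ℤ := ((m:ℤ)*c, (m:ℤ)*(k:ℤ)) with hα
  have hceil : (⌈((m*k : ℕ) : ℝ) * ξ⌉, ((m*k : ℕ) : ℤ)) = α := by
    have h2 : ((m*k : ℕ) : ℤ) = (m:ℤ)*(k:ℤ) := by push_cast; ring
    have h1 : ⌈((m*k : ℕ) : ℝ) * ξ⌉ = (m:ℤ)*c := by
      rw [Int.ceil_eq_iff]
      push_cast
      constructor <;> nlinarith
    rw [h1, h2]
  rw [hceil]
  -- analysis of parts of any partition of α
  set B : ℝ := m * ((c:ℝ) - k * ξ) with hB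
  have hB0 : 0 < B := by positivity
  have hB1 : B < 1 := by rw [hB]; nlinarith
  have hpart : ∀ s : Multiset (ℤ × ℤ), (∀ β ∈ s, TotPos D β) → s.sum = α →
      (∀ β ∈ s, β.1 = ⌈(β.2 : ℝ) * ξ⌉ ∧ 1 ≤ β.2 ∧ β.2 ≤ (m:ℤ)*k) ∧
        (Multiset.card s ≤ m*k) := by
    intro s hTP hsum
    have hmap : (s.map (embConj D)).sum = B := by
      rw [← embConj_sum, hsum, hα, embConj_eq']
      push_cast; ring
    have hnn : ∀ r ∈ s.map (embConj D), (0:ℝ) ≤ r := by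
      intro r hr
      obtain ⟨β, hβ, rfl⟩ := Multiset.mem_map.mp hr
      exact (hTP β hβ).2.le
    have hble : ∀ β ∈ s, embConj D β ≤ B := by
      intro β hβ
      rw [← hmap]
      exact Multiset.single_le_sum hnn _ (Multiset.mem_map_of_mem _ hβ)
    have hy1 : ∀ β ∈ s, 1 ≤ β.2 := by
      intro β hβ
      by_contra hy
      push_neg at hy
      have hy' : (β.2 : ℝ) ≤ 0 := by exact_mod_cast (by omega : β.2 ≤ 0)
      have hcj := (hTP β hβ).2
      have hcj' := hble β hβ
      rw [embConj_eq' β] at hcj hcj'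
      have hyξ : (β.2:ℝ) * ξ ≤ 0 := mul_nonpos_of_nonpos_of_nonneg hy' hξ0.le
      have hx1 : (β.1 : ℝ) < 1 := by linarith
      have hxz : β.1 < 1 := by exact_mod_cast hx1
      have hx0 : (β.1 : ℝ) ≤ 0 := by exact_mod_cast (by omega : β.1 ≤ 0)
      have hemb := (hTP β hβ).1
      unfold emb at hemb
      nlinarith [mul_nonpos_of_nonpos_of_nonneg hy' hω0.le]
    have hceil' : ∀ β ∈ s, β.1 = ⌈(β.2 : ℝ) * ξ⌉ := by
      intro β hβ
      have hcj := (hTP β hβ).2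
      have hcj' := hble β hβ
      rw [embConj_eq' β] at hcj hcj'
      symm
      rw [Int.ceil_eq_iff]
      constructor <;> push_cast <;> linarith
    have hsnd : (s.map Prod.snd).sum = (m:ℤ)*k := by
      rw [← snd_sum, hsum]
    have hsnn : ∀ r ∈ s.map Prod.snd, (1:ℤ) ≤ r := by
      intro r hr
      obtain ⟨β, hβ, rfl⟩ := Multiset.mem_map.mp hr
      exact hy1 β hβ
    have hcard : Multiset.card s ≤ m * k := by
      have h1 := Multiset.card_nsmul_le_sum hsnn
      rw [hsnd, Multiset.card_map, nsmul_eq_mul, mul_one] at h1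
      exact_mod_cast h1
    refine ⟨fun β hβ => ⟨hceil' β hβ, hy1 β hβ, ?_⟩, hcard⟩
    · have h1 := Multiset.single_le_sum (fun r hr => le_trans zero_le_one (hsnn r hr)) _
        (Multiset.mem_map_of_mem Prod.snd hβ)
      rw [hsnd] at h1
      exact h1
  -- finiteness
  set T : Finset (ℤ × ℤ) := (Finset.Icc (1:ℤ) ((m:ℤ)*k)).image (fun y : ℤ => (⌈(y:ℝ)*ξ⌉, y)) with hT
  haveI hfin : Finite {s : Multiset (ℤ × ℤ) // (∀ β ∈ s, TotPos D β) ∧ s.sum = α} := by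
    have hfin' : {s : Multiset (ℤ × ℤ) | (∀ β ∈ s, TotPos D β) ∧ s.sum = α}.Finite := by
      apply Set.Finite.subset ((((m*k : ℕ) • T.val).powerset.toFinset).finite_toSet)
      rintro s ⟨h1, h2⟩
      obtain ⟨hβall, hcard⟩ := hpart s h1 h2
      simp only [Finset.coe_sort_coe, Finset.mem_coe, Multiset.mem_toFinset,
        Multiset.mem_powerset]
      rw [Multiset.le_iff_count]
      intro a
      by_cases ha : a ∈ s
      · obtain ⟨hac, ha1, ha2⟩ := hβall a ha
        have haT : a ∈ T := by
          rw [hT]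
          exact Finset.mem_image.mpr ⟨a.2, Finset.mem_Icc.mpr ⟨ha1, ha2⟩,
            by rw [← hac]⟩
        rw [Multiset.count_nsmul, Multiset.count_eq_one_of_mem T.nodup haT, mul_one]
        exact le_trans (Multiset.count_le_card _ _) hcard
      · rw [Multiset.count_eq_zero_of_notMem ha]
        exact Nat.zero_le _
    exact hfin'.to_subtype
  -- injection
  have hc1 : (1:ℝ) ≤ (c:ℝ) := by exact_mod_cast hc0
  have hTPp : ∀ t : ℕ, 1 ≤ t → TotPos D ((t:ℤ)*c, (t:ℤ)*k) := by
    intro t ht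
    have ht1 : (1:ℝ) ≤ (t:ℝ) := by exact_mod_cast ht
    constructor
    · unfold emb
      push_cast
      have ht0 : (0:ℝ) < (t:ℝ) := by linarith
      nlinarith [mul_pos (mul_pos ht0 hk0) hω0]
    · rw [embConj_eq']
      push_cast
      nlinarith
  set f : Fin m → Multiset (ℤ × ℤ) := fun j =>
    (((j:ℕ)+1 : ℤ)*c, ((j:ℕ)+1 : ℤ)*k) ::ₘ Multiset.replicate (m-1-(j:ℕ)) ((c:ℤ)*1, (k:ℤ)*1) with hf
  have hfmem : ∀ j, (∀ β ∈ f j, TotPos D β) ∧ (f j).sum = α := by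
    intro j
    constructor
    · intro β hβ
      rw [hf] at hβ
      simp only [Multiset.mem_cons, Multiset.eq_of_mem_replicate] at hβ
      rcases hβ with hβ | hβ
      · rw [hβ]
        have := hTPp ((j:ℕ)+1) (by omega)
        simpa using this
      · rw [Multiset.eq_of_mem_replicate hβ]
        have := hTPp 1 le_rfl
        simpa using this
    · rw [hf]
      simp only [Multiset.sum_cons, Multiset.sum_replicate]
      have hjm : (j:ℕ) < m := j.isLt
      have hcast : ((m-1-(j:ℕ) : ℕ) : ℤ) = (m:ℤ) - 1 - (j:ℕ) := by omega
      rw [hα]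
      ext <;> simp [Prod.fst_add, Prod.snd_add, hcast] <;> push_cast [hcast] <;> ring
  have hfinj : Function.Injective f := by
    intro i j hij
    have := congrArg Multiset.card hij
    rw [hf] at this
    simp only [Multiset.card_cons, Multiset.card_replicate] at this
    have hi := i.isLt
    have hj := j.isLt
    exact Fin.ext (by omega)
  have hinj : Function.Injective
      (fun j : Fin m => (⟨f j, hfmem j⟩ :
        {s : Multiset (ℤ × ℤ) // (∀ β ∈ s, TotPos D β) ∧ s.sum = α})) := by
    intro i j hij
    exact hfinj (congrArg Subtype.val hij)
  calc m = Nat.card (Fin m) := by simp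
    _ ≤ _ := Nat.card_le_card_of_injective _ hinj
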